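/- For the attachment-detachment model, the total mass function M_α = (α/(1-e^{-2α}))·(2 + ∫_{-1}^1 exp(-(x²-1)/2 - α(x+1)) dx) - α satisfies M_α = M_{-α} for all α ≠ 0 (with the formula extended naturally), and M_α/α → 1 as α → +∞. -/

import Mathlib

open Real Filter intervalIntegral

noncomputable def Jint (α : ℝ) : ℝ :=
  ∫ x in (-1:ℝ)..1, Real.exp (-(x ^ 2 - 1) / 2 - α * (x + 1))

lemma Jint_symm (α : ℝ) : Jint α = Real.exp (-2 * α) * Jint (-α) := by
  unfold Jint
  rw [← intervalIntegral.integral_const_mul]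
  rw [show (∫ x in (-1:ℝ)..1, Real.exp (-2*α) * Real.exp (-(x ^ 2 - 1) / 2 - (-α) * (x + 1)))
      = ∫ x in (-1:ℝ)..1, Real.exp (-((-x) ^ 2 - 1) / 2 - α * ((-x) + 1)) from by
    apply intervalIntegral.integral_congr
    intro x _
    dsimp only
    rw [← Real.exp_add]
    congr 1
    ring]
  rw [intervalIntegral.integral_comp_neg (fun y => Real.exp (-(y ^ 2 - 1) / 2 - α * (y + 1)))]
  norm_num

lemma Jint_nonneg (α : ℝ) : 0 ≤ Jint α := by
  apply intervalIntegral.integral_nonneg (by norm_num)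
  intro x _
  positivity

lemma int_exp (α : ℝ) (hα : 0 < α) :
    (∫ x in (-1:ℝ)..1, Real.exp (-α * (x + 1))) = (1 - Real.exp (-2 * α)) / α := by
  have key : ∀ x : ℝ, HasDerivAt (fun y => -(Real.exp (-α * (y + 1)) / α))
      (Real.exp (-α * (x + 1))) x := by
    intro x
    have h1 : HasDerivAt (fun y : ℝ => -α * (y + 1)) (-α) x := by
      simpa using ((hasDerivAt_id x).add_const 1).const_mul (-α)
    have h2 : HasDerivAt (fun y => -(Real.exp (-α * (y + 1)) / α)) (-(Real.exp (-α * (x + 1)) * -α / α)) x := ((h1.exp).div_const α).neg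
    convert h2 using 1
    field_simp
  rw [intervalIntegral.integral_eq_sub_of_hasDerivAt (fun x _ => key x)
    ((Real.continuous_exp.comp (by continuity)).intervalIntegrable _ _)]
  have h0 : -α * ((-1:ℝ) + 1) = 0 := by ring
  rw [show -α * ((1:ℝ)+1) = -2*α by ring, h0, Real.exp_zero]
  field_simp
  ring

lemma Jint_le (α : ℝ) (hα : 0 < α) : Jint α ≤ Real.exp (1/2) / α := by
  have h1 : Jint α ≤ ∫ x in (-1:ℝ)..1, Real.exp (1/2) * Real.exp (-α * (x + 1)) := by
    apply intervalIntegral.integral_mono_on (by norm_num)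
    · exact (Real.continuous_exp.comp (by continuity)).intervalIntegrable _ _
    · exact (continuous_const.mul (Real.continuous_exp.comp (by continuity))).intervalIntegrable _ _
    · intro x _
      rw [← Real.exp_add]
      apply Real.exp_le_exp.mpr
      nlinarith [sq_nonneg x]
  rw [intervalIntegral.integral_const_mul, int_exp α hα] at h1
  have h2 : Real.exp (1/2) * ((1 - Real.exp (-2 * α)) / α) ≤ Real.exp (1/2) * (1 / α) := by
    have hle : (1 - Real.exp (-2 * α)) / α ≤ 1 / α := by
      gcongr
      linarith [Real.exp_nonneg (-2 * α)]
    exact mul_le_mul_of_nonneg_left hle (Real.exp_nonneg _)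
  calc Jint α ≤ Real.exp (1/2) * ((1 - Real.exp (-2 * α)) / α) := h1
    _ ≤ Real.exp (1/2) * (1 / α) := h2
    _ = Real.exp (1/2) / α := by ring

/-- Symmetry M_α = M_{-α} for α ≠ 0 and asymptotics M_α/α → 1 as α → +∞,
for M_α = (α/(1-e^{-2α}))·(2 + ∫_{-1}^1 e^{-(x²-1)/2 - α(x+1)} dx) - α. -/
theorem stmt_15 (Mass : ℝ → ℝ)
    (hMass : ∀ α : ℝ, α ≠ 0 →
      Mass α = (α / (1 - Real.exp (-2 * α))) *
          (2 + ∫ x in (-1 : ℝ)..1, Real.exp (-(x ^ 2 - 1) / 2 - α * (x + 1))) - α) :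
    (∀ α : ℝ, α ≠ 0 → Mass α = Mass (-α)) ∧
      Filter.Tendsto (fun α => Mass α / α) Filter.atTop (nhds 1) := by
  have hJ : ∀ α : ℝ, (∫ x in (-1 : ℝ)..1, Real.exp (-(x ^ 2 - 1) / 2 - α * (x + 1))) = Jint α :=
    fun α => rfl
  constructor
  · intro α hα
    have hE : Real.exp (-2 * α) ≠ 1 := by
      intro h
      apply hα
      have := Real.exp_injective (by rw [h, Real.exp_zero] : Real.exp (-2*α) = Real.exp 0)
      linarith
    have hE' : Real.exp (-2 * (-α)) ≠ 1 := by
      intro h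
      apply hα
      have := Real.exp_injective (by rw [h, Real.exp_zero] : Real.exp (-2*(-α)) = Real.exp 0)
      linarith
    have hEE' : Real.exp (-2 * α) * Real.exp (-2 * (-α)) = 1 := by
      rw [← Real.exp_add]; norm_num
    rw [hMass α hα, hMass (-α) (neg_ne_zero.mpr hα), hJ, hJ, Jint_symm α]
    set E := Real.exp (-2 * α) with hEdef
    set E' := Real.exp (-2 * (-α)) with hE'def
    set t := Jint (-α) with htdef
    have h1 : 1 - E ≠ 0 := fun h => hE (by linarith)
    have h2 : 1 - E' ≠ 0 := fun h => hE' (by linarith)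
    field_simp
    linear_combination (-t - 2) * hEE'
  · have hJ0 : Tendsto Jint atTop (nhds 0) := by
      apply tendsto_of_tendsto_of_tendsto_of_le_of_le' tendsto_const_nhds
        (show Tendsto (fun α : ℝ => Real.exp (1/2) / α) atTop (nhds 0) by
          simpa [div_eq_mul_inv] using tendsto_inv_atTop_zero.const_mul (Real.exp (1/2)))
      · filter_upwards with α using Jint_nonneg α
      · filter_upwards [eventually_gt_atTop (0:ℝ)] with α hα using Jint_le α hα
    have hE0 : Tendsto (fun α : ℝ => Real.exp (-2 * α)) atTop (nhds 0) := by
      apply Real.tendsto_exp_atBot.comp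
      have h2a : Tendsto (fun α : ℝ => 2 * α) atTop atTop :=
        tendsto_id.const_mul_atTop (by norm_num)
      have h := tendsto_neg_atTop_atBot.comp h2a
      convert h using 1
      funext α
      simp [neg_mul]
    have hA : Tendsto (fun α : ℝ => (2 + Jint α) / (1 - Real.exp (-2 * α)))
        atTop (nhds ((2 + 0) / (1 - 0))) :=
      Tendsto.div (tendsto_const_nhds.add hJ0) (tendsto_const_nhds.sub hE0) (by norm_num)
    norm_num at hA
    have hmain : Tendsto (fun α : ℝ => (2 + Jint α) / (1 - Real.exp (-2 * α)) - 1)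
        atTop (nhds 1) := by
      have h := hA.sub (tendsto_const_nhds (x := (1:ℝ)))
      norm_num at h
      exact h.congr fun α => by ring_nf
    apply hmain.congr'
    filter_upwards [eventually_gt_atTop (0:ℝ)] with α hα
    have hα' : α ≠ 0 := ne_of_gt hα
    have hE : 1 - Real.exp (-2 * α) ≠ 0 := by
      have : Real.exp (-2 * α) < 1 := Real.exp_lt_one_iff.mpr (by linarith)
      linarith
    rw [hMass α hα', hJ]
    field_simp
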